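/- Let m ≥ 2 and δ > 0, and let {A(t)}_{t≥0} be a sequence of m×m doubly stochastic matrices with A_{ii}(t) ≥ δ for all t ≥ 0 and all i ∈ [m]. Let x(t+1) = A(t)x(t) for an arbitrary x(0) ∈ ℝ^m. Define the infinite flow graph G = ([m], E) with E = {{i₁,i₂} : i₁ ≠ i₂ and Σ_{t=0}^∞ A_{i₁i₂}(t) = ∞}. Then for any two agents i₁, i₂ belonging to the same connected component of G, lim_{t→∞} (x_{i₁}(t) − x_{i₂}(t)) = 0. -/

import Mathlib

open Filter Topology Finset


noncomputable def sset {m : ℕ} (x : Fin m → ℝ) (k : ℕ) : ℝ :=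
  if h : ((Finset.univ : Finset (Fin m)).powersetCard k).Nonempty then
    ((Finset.univ : Finset (Fin m)).powersetCard k).inf' h (fun S => ∑ i ∈ S, x i)
  else 0

lemma sset_le_sum {m : ℕ} (x : Fin m → ℝ) {k : ℕ} {S : Finset (Fin m)} (hS : S.card = k) :
    sset x k ≤ ∑ i ∈ S, x i := by
  have hmem : S ∈ (Finset.univ : Finset (Fin m)).powersetCard k := by
    simp [Finset.mem_powersetCard_univ, hS]
  have hne : ((Finset.univ : Finset (Fin m)).powersetCard k).Nonempty := ⟨S, hmem⟩
  rw [sset, dif_pos hne]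
  exact Finset.inf'_le _ hmem

lemma exists_sset_min {m : ℕ} (x : Fin m → ℝ) {k : ℕ} (hk : k ≤ m) :
    ∃ S : Finset (Fin m), S.card = k ∧ ∑ i ∈ S, x i = sset x k := by
  have hne : ((Finset.univ : Finset (Fin m)).powersetCard k).Nonempty := by
    rw [Finset.powersetCard_nonempty]; simpa using hk
  obtain ⟨S, hmem, hval⟩ := Finset.exists_mem_eq_inf' hne (fun S => ∑ i ∈ S, x i)
  exact ⟨S, by simpa [Finset.mem_powersetCard_univ] using hmem, by rw [sset, dif_pos hne, hval]⟩

lemma sset_zero {m : ℕ} (x : Fin m → ℝ) : sset x 0 = 0 := by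
  obtain ⟨S, hS, hsum⟩ := exists_sset_min x (Nat.zero_le m)
  rw [← hsum, Finset.card_eq_zero.1 hS, Finset.sum_empty]

/-- LP lemma: any fractional selection of total mass k, entries in [0,1], has
weighted sum at least the sum of the k smallest. -/
lemma sset_le_weighted {m : ℕ} (x : Fin m → ℝ) {k : ℕ} (hk : k ≤ m)
    (w : Fin m → ℝ) (hw0 : ∀ j, 0 ≤ w j) (hw1 : ∀ j, w j ≤ 1)
    (hwsum : ∑ j, w j = (k : ℝ)) :
    sset x k ≤ ∑ j, w j * x j := by
  obtain ⟨S, hScard, hSsum⟩ := exists_sset_min x hk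
  rcases Nat.eq_zero_or_pos k with hk0 | hkpos
  · subst hk0
    rw [sset_zero]
    refine Finset.sum_nonneg fun j _ => ?_
    have hj0 : w j = 0 := by
      have := (Finset.sum_eq_zero_iff_of_nonneg (fun j _ => hw0 j)).1 (by simpa using hwsum)
      exact this j (Finset.mem_univ j)
    simp [hj0]
  · -- S nonempty
    have hSne : S.Nonempty := Finset.card_pos.1 (hScard ▸ hkpos)
    obtain ⟨i0, hi0S, hi0max⟩ := S.exists_max_image x hSne
    set c := x i0 with hc
    -- every j ∉ S has x j ≥ c
    have hout : ∀ j, j ∉ S → c ≤ x j := by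
      intro j hj
      have hcard' : (insert j (S.erase i0)).card = k := by
        rw [Finset.card_insert_of_notMem (fun h => hj (Finset.mem_of_mem_erase h)),
          Finset.card_erase_of_mem hi0S, hScard]
        omega
      have hle := sset_le_sum x hcard'
      rw [← hSsum] at hle
      rw [Finset.sum_insert (fun h => hj (Finset.mem_of_mem_erase h)),
        Finset.sum_erase_eq_sub hi0S] at hle
      linarith
    -- main computation
    have key : ∑ j ∈ S, (x j - c) ≤ ∑ j, w j * (x j - c) := by
      rw [← Finset.sum_add_sum_compl S (fun j => w j * (x j - c))]
      have h1 : ∑ j ∈ S, (x j - c) ≤ ∑ j ∈ S, w j * (x j - c) := by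
        refine Finset.sum_le_sum fun j hj => ?_
        have hxc : x j - c ≤ 0 := sub_nonpos.2 (hi0max j hj)
        nlinarith [hw1 j, hw0 j]
      have h2 : (0:ℝ) ≤ ∑ j ∈ Sᶜ, w j * (x j - c) := by
        refine Finset.sum_nonneg fun j hj => ?_
        have := hout j (by simpa using hj)
        have := hw0 j
        nlinarith
      linarith
    have hexp : ∑ j, w j * (x j - c) = (∑ j, w j * x j) - k * c := by
      simp only [mul_sub]
      rw [Finset.sum_sub_distrib, ← Finset.sum_mul, hwsum]
    have hexp2 : ∑ j ∈ S, (x j - c) = (∑ j ∈ S, x j) - k * c := by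
      rw [Finset.sum_sub_distrib, Finset.sum_const, hScard]
      simp [mul_comm]
    rw [hexp, hexp2] at key
    linarith [key, hSsum]


/-- row-wise Lyapunov inequality. -/
lemma row_lyap {m : ℕ} (p : Fin m → ℝ) (f : Fin m → ℝ) (δ : ℝ)
    (hp0 : ∀ j, 0 ≤ p j) (hpsum : ∑ j, p j = 1) (i : Fin m) (hpi : δ ≤ p i) (hδ : 0 ≤ δ) :
    (∑ j, p j * f j)^2 + δ * ∑ j, p j * (f i - f j)^2 ≤ ∑ j, p j * (f j)^2 := by
  have hident : ∑ j, ∑ k, p j * p k * (f j - f k)^2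
      = 2 * (∑ j, p j * (f j)^2) - 2 * (∑ j, p j * f j)^2 := by
    have h1 : ∀ j k : Fin m, p j * p k * (f j - f k)^2
        = (p j * (f j)^2) * p k + p j * (p k * (f k)^2) - 2 * ((p j * f j) * (p k * f k)) := by
      intro j k; ring
    simp only [h1]
    rw [Finset.sum_congr rfl (fun j _ => Finset.sum_sub_distrib _ _),
        Finset.sum_congr rfl (fun j _ => congrArg₂ (· - ·) Finset.sum_add_distrib rfl)]
    rw [Finset.sum_sub_distrib, Finset.sum_add_distrib]
    simp only [← Finset.sum_mul, ← Finset.mul_sum]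
    rw [hpsum]
    ring_nf
  -- extraction: double sum ≥ 2 * ∑ k p i p k (f i - f k)^2
  have hextract : 2 * ∑ k, p i * p k * (f i - f k)^2
      ≤ ∑ j, ∑ k, p j * p k * (f j - f k)^2 := by
    have hsplit : ∑ j, ∑ k, p j * p k * (f j - f k)^2
        = (∑ k, p i * p k * (f i - f k)^2) + ∑ j ∈ Finset.univ.erase i, ∑ k, p j * p k * (f j - f k)^2 := by
      rw [← Finset.add_sum_erase _ _ (Finset.mem_univ i)]
    rw [hsplit]
    have h2 : ∑ k, p i * p k * (f i - f k)^2
        ≤ ∑ j ∈ Finset.univ.erase i, ∑ k, p j * p k * (f j - f k)^2 := by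
      have h3 : ∑ k, p i * p k * (f i - f k)^2 = ∑ j, p j * p i * (f j - f i)^2 := by
        apply Finset.sum_congr rfl; intro j _; ring
      rw [h3]
      have h4 : ∑ j, p j * p i * (f j - f i)^2
          = ∑ j ∈ Finset.univ.erase i, p j * p i * (f j - f i)^2 := by
        rw [← Finset.add_sum_erase _ _ (Finset.mem_univ i)]
        simp
      rw [h4]
      refine Finset.sum_le_sum fun j _ => ?_
      have : p j * p i * (f j - f i)^2 ≤ ∑ k ∈ {i}, p j * p k * (f j - f k)^2 := by simp
      refine this.trans (Finset.sum_le_sum_of_subset_of_nonneg (Finset.subset_univ _) ?_)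
      intro k _ _
      exact mul_nonneg (mul_nonneg (hp0 _) (hp0 _)) (sq_nonneg _)
    linarith
  have hfin : δ * ∑ j, p j * (f i - f j)^2 ≤ ∑ k, p i * p k * (f i - f k)^2 := by
    have : ∑ k, p i * p k * (f i - f k)^2 = p i * ∑ k, p k * (f i - f k)^2 := by
      rw [Finset.mul_sum]; apply Finset.sum_congr rfl; intro k _; ring
    rw [this]
    have hnn : 0 ≤ ∑ k, p k * (f i - f k)^2 :=
      Finset.sum_nonneg fun k _ => mul_nonneg (hp0 _) (sq_nonneg _)
    nlinarith
  nlinarith [hident, hextract, hfin]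

/-- Lyapunov decrease for one doubly stochastic step. -/
lemma lyap_step {m : ℕ} (A : Matrix (Fin m) (Fin m) ℝ) (x : Fin m → ℝ) (δ : ℝ) (hδ : 0 ≤ δ)
    (hnonneg : ∀ i j, 0 ≤ A i j) (hrow : ∀ i, ∑ j, A i j = 1) (hcol : ∀ j, ∑ i, A i j = 1)
    (hdiag : ∀ i, δ ≤ A i i) :
    (∑ i, (A.mulVec x i)^2) + δ * ∑ i, ∑ j, A i j * (x i - x j)^2 ≤ ∑ i, (x i)^2 := by
  have hrowlyap : ∀ i, (A.mulVec x i)^2 + δ * ∑ j, A i j * (x i - x j)^2 ≤ ∑ j, A i j * (x j)^2 := by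
    intro i
    have := row_lyap (fun j => A i j) x δ (fun j => hnonneg i j) (hrow i) i (hdiag i) hδ
    simpa [Matrix.mulVec, dotProduct] using this
  have hsum := Finset.sum_le_sum (fun i (_ : i ∈ Finset.univ) => hrowlyap i)
  rw [Finset.sum_add_distrib] at hsum
  have hcolsum : ∑ i, ∑ j, A i j * (x j)^2 = ∑ i, (x i)^2 := by
    rw [Finset.sum_comm]
    apply Finset.sum_congr rfl
    intro j _
    rw [← Finset.sum_mul, hcol j, one_mul]
  rw [hcolsum] at hsum
  have hms : δ * ∑ i, ∑ j, A i j * (x i - x j)^2 = ∑ i, δ * ∑ j, A i j * (x i - x j)^2 :=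
    Finset.mul_sum _ _ _
  rw [hms]
  linarith

/-- monotonicity of bottom-k sums under a doubly stochastic step -/
lemma sset_mulVec_mono {m : ℕ} (A : Matrix (Fin m) (Fin m) ℝ) (x : Fin m → ℝ)
    (hnonneg : ∀ i j, 0 ≤ A i j) (hrow : ∀ i, ∑ j, A i j = 1) (hcol : ∀ j, ∑ i, A i j = 1)
    {k : ℕ} (hk : k ≤ m) :
    sset x k ≤ sset (A.mulVec x) k := by
  obtain ⟨S, hScard, hSsum⟩ := exists_sset_min (A.mulVec x) hk
  rw [← hSsum]
  have hexp : ∑ i ∈ S, A.mulVec x i = ∑ j, (∑ i ∈ S, A i j) * x j := by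
    simp only [Matrix.mulVec, dotProduct]
    rw [Finset.sum_comm]
    exact Finset.sum_congr rfl fun j _ => by rw [Finset.sum_mul]
  rw [hexp]
  refine sset_le_weighted x hk _ (fun j => Finset.sum_nonneg fun i _ => hnonneg i j)
    (fun j => ?_) ?_
  · calc ∑ i ∈ S, A i j ≤ ∑ i, A i j :=
        Finset.sum_le_sum_of_subset_of_nonneg (Finset.subset_univ _) fun i _ _ => hnonneg i j
    _ = 1 := hcol j
  · rw [Finset.sum_comm]
    rw [Finset.sum_congr rfl fun i (_ : i ∈ S) => hrow i]
    simp [hScard]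

/-- bounded partial sums give a finite ENNReal tsum -/
lemma tsum_ofReal_ne_top_of_partial {f : ℕ → ℝ} {c : ℝ} (hf : ∀ t, 0 ≤ f t)
    (h : ∀ F : Finset ℕ, ∑ t ∈ F, f t ≤ c) :
    (∑' t, ENNReal.ofReal (f t)) ≠ ⊤ := by
  have hle : (∑' t, ENNReal.ofReal (f t)) ≤ ENNReal.ofReal c := by
    rw [ENNReal.tsum_eq_iSup_sum]
    refine iSup_le fun F => ?_
    calc ∑ t ∈ F, ENNReal.ofReal (f t) = ENNReal.ofReal (∑ t ∈ F, f t) :=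
          (ENNReal.ofReal_sum_of_nonneg (fun t _ => hf t)).symm
      _ ≤ ENNReal.ofReal c := ENNReal.ofReal_le_ofReal (h F)
  exact ne_top_of_le_ne_top ENNReal.ofReal_ne_top hle

/-- a member of a minimizing set is at most the k-th smallest gap value -/
lemma sset_mem_le {m : ℕ} (x : Fin m → ℝ) {k : ℕ} {S : Finset (Fin m)}
    (hS : S.card = k) (hmin : ∑ i ∈ S, x i = sset x k) {i : Fin m} (hi : i ∈ S) :
    x i ≤ sset x k - sset x (k - 1) := by
  have h1 : (S.erase i).card = k - 1 := by rw [Finset.card_erase_of_mem hi, hS]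
  have h2 := sset_le_sum x h1
  rw [Finset.sum_erase_eq_sub hi, hmin] at h2
  linarith

/-- a non-member of a minimizing set is at least the (k+1)-th smallest gap value -/
lemma sset_notmem_ge {m : ℕ} (x : Fin m → ℝ) {k : ℕ} {S : Finset (Fin m)}
    (hS : S.card = k) (hmin : ∑ i ∈ S, x i = sset x k) {j : Fin m} (hj : j ∉ S) :
    sset x (k + 1) - sset x k ≤ x j := by
  have h1 : (insert j S).card = k + 1 := by rw [Finset.card_insert_of_notMem hj, hS]
  have h2 := sset_le_sum x h1
  rw [Finset.sum_insert hj, hmin] at h2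
  linarith


set_option maxHeartbeats 2000000 in
/-- For the backward-product dynamics driven by doubly stochastic
matrices with diagonal entries bounded below by δ > 0, any two agents lying in
the same connected component of the infinite flow graph asymptotically agree. -/
theorem stmt1 (m : ℕ) (hm : 2 ≤ m) (δ : ℝ) (hδ : 0 < δ)
    (A : ℕ → Matrix (Fin m) (Fin m) ℝ)
    (hnonneg : ∀ t i j, 0 ≤ A t i j)
    (hrow : ∀ t i, ∑ j, A t i j = 1)
    (hcol : ∀ t j, ∑ i, A t i j = 1)
    (hdiag : ∀ t i, δ ≤ A t i i)
    (x : ℕ → Fin m → ℝ)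
    (hx : ∀ t, x (t + 1) = (A t).mulVec (x t))
    -- the infinite flow graph: {i₁,i₂} is an edge iff Σ_t A_{i₁i₂}(t) = ∞
    (G : SimpleGraph (Fin m))
    (hG : G = SimpleGraph.fromRel
      (fun i₁ i₂ => (∑' t : ℕ, ENNReal.ofReal (A t i₁ i₂)) = ⊤)) :
    ∀ i₁ i₂ : Fin m, G.Reachable i₁ i₂ →
      Tendsto (fun t => x t i₁ - x t i₂) atTop (𝓝 0) := by
  classical
  subst hG
  -- uniform bound on the states
  set C : ℝ := ∑ i, |x 0 i| with hCdef
  have hC0 : 0 ≤ C := Finset.sum_nonneg fun i _ => abs_nonneg _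
  have hbd : ∀ t i, |x t i| ≤ C := by
    intro t
    induction t with
    | zero =>
      intro i
      exact Finset.single_le_sum (f := fun i => |x 0 i|) (fun i _ => abs_nonneg _)
        (Finset.mem_univ i)
    | succ t ih =>
      intro i
      rw [hx t]
      calc |(A t).mulVec (x t) i| = |∑ j, A t i j * x t j| := by
            simp [Matrix.mulVec, dotProduct]
        _ ≤ ∑ j, |A t i j * x t j| := Finset.abs_sum_le_sum_abs _ _
        _ ≤ ∑ j, A t i j * C := by
            refine Finset.sum_le_sum fun j _ => ?_
            rw [abs_mul, abs_of_nonneg (hnonneg t i j)]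
            exact mul_le_mul_of_nonneg_left (ih j) (hnonneg t i j)
        _ = C := by rw [← Finset.sum_mul, hrow t i, one_mul]
  -- Lyapunov function and dissipation
  set V : ℕ → ℝ := fun t => ∑ i, (x t i)^2 with hVdef
  set Q : ℕ → ℝ := fun t => ∑ i, ∑ j, A t i j * (x t i - x t j)^2 with hQdef
  have hQrow_nonneg : ∀ t (i : Fin m), 0 ≤ ∑ j, A t i j * (x t i - x t j)^2 :=
    fun t i => Finset.sum_nonneg fun j _ => mul_nonneg (hnonneg t i j) (sq_nonneg _)
  have hQ0 : ∀ t, 0 ≤ Q t := fun t => Finset.sum_nonneg fun i _ => hQrow_nonneg t i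
  have hVnn : ∀ t, 0 ≤ V t := fun t => Finset.sum_nonneg fun i _ => sq_nonneg _
  have hstep : ∀ t, V (t+1) + δ * Q t ≤ V t := by
    intro t
    have := lyap_step (A t) (x t) δ hδ.le (hnonneg t) (hrow t) (hcol t) (hdiag t)
    rw [hVdef, hQdef]
    simp only [hx t]
    exact this
  have hVsum : ∀ T, V T + δ * ∑ t ∈ Finset.range T, Q t ≤ V 0 := by
    intro T
    induction T with
    | zero => simp
    | succ T ih =>
      rw [Finset.sum_range_succ, mul_add]
      have := hstep T
      linarith
  have hQpart : ∀ F : Finset ℕ, ∑ t ∈ F, Q t ≤ V 0 / δ := by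
    intro F
    have hsub : F ⊆ Finset.range (F.sup id + 1) := fun t ht =>
      Finset.mem_range.2 (Nat.lt_succ_of_le (Finset.le_sup (f := id) ht))
    have h1 : ∑ t ∈ F, Q t ≤ ∑ t ∈ Finset.range (F.sup id + 1), Q t :=
      Finset.sum_le_sum_of_subset_of_nonneg hsub fun t _ _ => hQ0 t
    have h2 := hVsum (F.sup id + 1)
    have h3 := hVnn (F.sup id + 1)
    rw [le_div_iff₀ hδ]
    nlinarith
  have hQ_ge_pair : ∀ t (i j : Fin m), A t i j * (x t i - x t j)^2 ≤ Q t := by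
    intro t i j
    calc A t i j * (x t i - x t j)^2
        ≤ ∑ j', A t i j' * (x t i - x t j')^2 :=
          Finset.single_le_sum (f := fun j' => A t i j' * (x t i - x t j')^2)
            (fun j' _ => mul_nonneg (hnonneg t i j') (sq_nonneg _)) (Finset.mem_univ j)
      _ ≤ Q t := Finset.single_le_sum (fun i' _ => hQrow_nonneg t i') (Finset.mem_univ i)
  have hQ_ge_row : ∀ t (i : Fin m), (∑ j, A t i j * (x t i - x t j)^2) ≤ Q t :=
    fun t i => Finset.single_le_sum (fun i' _ => hQrow_nonneg t i') (Finset.mem_univ i)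
  -- the monotone bottom-k sums and their limits
  set s : ℕ → ℕ → ℝ := fun k t => sset (x t) k with hsdef
  have hsmono : ∀ k, k ≤ m → Monotone (s k) := by
    intro k hk
    apply monotone_nat_of_le_succ
    intro t
    rw [hsdef]
    simp only
    rw [hx t]
    exact sset_mulVec_mono (A t) (x t) (hnonneg t) (hrow t) (hcol t) hk
  have hsbd : ∀ k, k ≤ m → ∀ t, s k t ≤ (m:ℝ) * C := by
    intro k hk t
    obtain ⟨S, hScard, hSsum⟩ := exists_sset_min (x t) hk
    rw [hsdef]; simp only [← hSsum]
    calc ∑ i ∈ S, x t i ≤ ∑ i ∈ S, C := Finset.sum_le_sum fun i _ =>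
          (le_abs_self _).trans (hbd t i)
      _ = (S.card : ℝ) * C := by rw [Finset.sum_const, nsmul_eq_mul]
      _ ≤ (m:ℝ) * C := by
          apply mul_le_mul_of_nonneg_right _ hC0
          exact_mod_cast hScard ▸ hk
  set L : ℕ → ℝ := fun k => ⨆ t, s k t with hLdef
  have hsL : ∀ k, k ≤ m → Tendsto (s k) atTop (𝓝 (L k)) := by
    intro k hk
    exact tendsto_atTop_ciSup (hsmono k hk)
      ⟨(m:ℝ) * C, Set.forall_mem_range.2 fun t => hsbd k hk t⟩
  have hsle : ∀ k, k ≤ m → ∀ t, s k t ≤ L k := by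
    intro k hk t
    exact le_ciSup ⟨(m:ℝ) * C, Set.forall_mem_range.2 fun t => hsbd k hk t⟩ t
  -- choose minimizing sets
  have hBex : ∀ t k, k ≤ m → ∃ S : Finset (Fin m),
      S.card = k ∧ ∑ i ∈ S, x t i = sset (x t) k :=
    fun t k hk => exists_sset_min (x t) hk
  choose B hBcard hBsum using hBex
  -- sorted limit values
  obtain ⟨l, hldef⟩ : ∃ f : ℕ → ℝ, f = fun k => L k - L (k - 1) := ⟨_, rfl⟩
  have hyub : ∀ k, 1 ≤ k → k ≤ m → ∀ t, s k t - s (k-1) t ≤ C := by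
    intro k hk1 hkm t
    have hk1m : k - 1 ≤ m := by omega
    have hj : ∃ j, j ∉ B t (k-1) hk1m := by
      by_contra h
      push_neg at h
      have huniv : B t (k-1) hk1m = Finset.univ := Finset.eq_univ_iff_forall.2 h
      have := hBcard t (k-1) hk1m
      rw [huniv, Finset.card_univ, Fintype.card_fin] at this
      omega
    obtain ⟨j, hj⟩ := hj
    have h1 := sset_notmem_ge (x t) (hBcard t (k-1) hk1m) (hBsum t (k-1) hk1m) hj
    have hkk : k - 1 + 1 = k := by omega
    rw [hkk] at h1
    have h2 : x t j ≤ C := (le_abs_self _).trans (hbd t j)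
    have h3 : s k t - s (k-1) t ≤ x t j := h1
    linarith
  have hylb : ∀ k, 1 ≤ k → k ≤ m → ∀ t, -C ≤ s k t - s (k-1) t := by
    intro k hk1 hkm t
    have hne : (B t k hkm).Nonempty := by
      rw [← Finset.card_pos, hBcard t k hkm]; omega
    obtain ⟨i0, hi0⟩ := hne
    have h1 := sset_mem_le (x t) (hBcard t k hkm) (hBsum t k hkm) hi0
    have h2 : -C ≤ x t i0 := neg_le_of_abs_le (hbd t i0)
    have h3 : x t i0 ≤ s k t - s (k-1) t := h1
    linarith
  have hymono : ∀ k, 1 ≤ k → k + 1 ≤ m → ∀ t, s k t - s (k-1) t ≤ s (k+1) t - s k t := by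
    intro k hk1 hkm t
    have hk1m : k - 1 ≤ m := by omega
    have hk2m : k + 1 ≤ m := hkm
    have hnsub : ¬ (B t (k+1) hk2m ⊆ B t (k-1) hk1m) := by
      intro hsub
      have := Finset.card_le_card hsub
      rw [hBcard, hBcard] at this
      omega
    obtain ⟨j, hj2, hj1⟩ := Finset.not_subset.1 hnsub
    have h1 := sset_notmem_ge (x t) (hBcard t (k-1) hk1m) (hBsum t (k-1) hk1m) hj1
    have hkk : k - 1 + 1 = k := by omega
    rw [hkk] at h1
    have h2 := sset_mem_le (x t) (hBcard t (k+1) hk2m) (hBsum t (k+1) hk2m) hj2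
    have hkk2 : k + 1 - 1 = k := by omega
    rw [hkk2] at h2
    have h3 : s k t - s (k-1) t ≤ x t j := h1
    have h4 : x t j ≤ s (k+1) t - s k t := h2
    linarith
  have hlbd : ∀ k, 1 ≤ k → k ≤ m → |l k| ≤ C := by
    intro k hk1 hkm
    have ht : Tendsto (fun t => s k t - s (k-1) t) atTop (𝓝 (L k - L (k-1))) :=
      (hsL k hkm).sub (hsL (k-1) (by omega))
    simp only [hldef]
    refine abs_le.2 ⟨?_, ?_⟩
    · exact ge_of_tendsto' ht (fun t => hylb k hk1 hkm t)
    · exact le_of_tendsto' ht (fun t => hyub k hk1 hkm t)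
  have hladj : ∀ k, 1 ≤ k → k + 1 ≤ m → l k ≤ l (k+1) := by
    intro k hk1 hkm
    have ht1 : Tendsto (fun t => s k t - s (k-1) t) atTop (𝓝 (L k - L (k-1))) :=
      (hsL k (by omega)).sub (hsL (k-1) (by omega))
    have ht2 : Tendsto (fun t => s (k+1) t - s k t) atTop (𝓝 (L (k+1) - L k)) :=
      (hsL (k+1) hkm).sub (hsL k (by omega))
    have := le_of_tendsto_of_tendsto' ht1 ht2 (fun t => hymono k hk1 hkm t)
    simp only [hldef]
    have hkk : k + 1 - 1 = k := by omega
    rw [hkk]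
    exact this
  have hlmono : ∀ k1 k2, 1 ≤ k1 → k1 ≤ k2 → k2 ≤ m → l k1 ≤ l k2 := by
    intro k1 k2 h1 h12
    induction k2, h12 using Nat.le_induction with
    | base => intro _; exact le_refl _
    | succ n hn ih =>
      intro hnm
      exact (ih (by omega)).trans (hladj n (by omega) hnm)
  -- the set of gap levels
  set K : Finset ℕ := (Finset.Icc 1 (m-1)).filter (fun k => l k < l (k+1)) with hKdef
  -- main per-gap lemma
  have hAle1 : ∀ t (i j : Fin m), A t i j ≤ 1 := by
    intro t i j
    have h := Finset.single_le_sum (f := fun j' => A t i j')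
      (fun j' _ => hnonneg t i j') (Finset.mem_univ j)
    rw [hrow t i] at h
    exact h
  have hgapmain : ∀ k ∈ K, ∃ S' : Finset (Fin m),
      (∀ᶠ t in atTop, ∀ h : k ≤ m, B t k h = S') ∧
      ∀ a b, a ∈ S' → b ∉ S' →
        (∑' t, ENNReal.ofReal (A t a b)) ≠ ⊤ ∧ (∑' t, ENNReal.ofReal (A t b a)) ≠ ⊤ := by
    intro k hK
    rw [hKdef, Finset.mem_filter, Finset.mem_Icc] at hK
    obtain ⟨⟨hk1, hkm1⟩, hgap⟩ := hK
    have hkm : k ≤ m := by omega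
    have hk1m : k + 1 ≤ m := by omega
    obtain ⟨g, hgdef⟩ : ∃ g : ℝ, g = l (k+1) - l k := ⟨_, rfl⟩
    have hg : 0 < g := by rw [hgdef]; linarith
    have hlkval : l k = L k - L (k-1) := by simp only [hldef]
    have hlk1val : l (k+1) = L (k+1) - L k := by
      simp only [hldef, Nat.add_sub_cancel]
    -- eventual accuracy at levels k-1 and k+1
    have hacc : ∀ᶠ t in atTop, L (k-1) - g/8 ≤ s (k-1) t ∧ L (k+1) - g/8 ≤ s (k+1) t := by
      have h1 : ∀ᶠ t in atTop, L (k-1) - g/8 < s (k-1) t :=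
        (hsL (k-1) (by omega)).eventually (eventually_gt_nhds (by linarith))
      have h2 : ∀ᶠ t in atTop, L (k+1) - g/8 < s (k+1) t :=
        (hsL (k+1) hk1m).eventually (eventually_gt_nhds (by linarith))
      filter_upwards [h1, h2] with t h1 h2
      exact ⟨h1.le, h2.le⟩
    obtain ⟨T1, hT1⟩ := eventually_atTop.1 hacc
    have hup : ∀ t, T1 ≤ t → ∀ a ∈ B t k hkm, x t a ≤ l k + g/8 := by
      intro t ht a ha
      have h1 : x t a ≤ s k t - s (k-1) t :=
        sset_mem_le (x t) (hBcard t k hkm) (hBsum t k hkm) ha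
      have h2 : s k t ≤ L k := hsle k hkm t
      have h3 := (hT1 t ht).1
      rw [hlkval, hgdef, hlkval, hlk1val]
      linarith
    have hdown : ∀ t, T1 ≤ t → ∀ b, b ∉ B t k hkm → l (k+1) - g/8 ≤ x t b := by
      intro t ht b hb
      have h1 : s (k+1) t - s k t ≤ x t b :=
        sset_notmem_ge (x t) (hBcard t k hkm) (hBsum t k hkm) hb
      have h2 : s k t ≤ L k := hsle k hkm t
      have h3 := (hT1 t ht).2
      rw [hlk1val, hgdef, hlkval, hlk1val]
      linarith
    have hsep : ∀ t, T1 ≤ t → ∀ a ∈ B t k hkm, ∀ b, b ∉ B t k hkm →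
        g/2 ≤ x t b - x t a := by
      intro t ht a ha b hb
      have h1 := hup t ht a ha
      have h2 := hdown t ht b hb
      have : l (k+1) - l k = g := by rw [hgdef]
      linarith
    -- quantum of dissipation at each membership change
    obtain ⟨c0, hc0def⟩ : ∃ c : ℝ, c = (3*g/4) / (2*C+1) := ⟨_, rfl⟩
    have hc0 : 0 < c0 := by rw [hc0def]; exact div_pos (by linarith) (by linarith)
    obtain ⟨c1, hc1def⟩ : ∃ c : ℝ, c = (g/2)^2 * c0 := ⟨_, rfl⟩
    have hc1 : 0 < c1 := by rw [hc1def]; exact mul_pos (by positivity) hc0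
    have hlkC := hlbd k hk1 hkm
    have hlk1C := hlbd (k+1) (by omega) hk1m
    have hquantum : ∀ (i : Fin m) t, T1 ≤ t →
        ¬ (i ∈ B t k hkm ↔ i ∈ B (t+1) k hkm) →
        c1 ≤ ∑ j, A t i j * (x t i - x t j)^2 := by
      intro i t ht hch
      have ht1 : T1 ≤ t + 1 := by omega
      have hmv : x (t+1) i = ∑ j, A t i j * x t j := by
        rw [hx t]; simp [Matrix.mulVec, dotProduct]
      by_cases hi : i ∈ B t k hkm
      · -- upward switch
        have hi1 : i ∉ B (t+1) k hkm := fun h => hch ⟨fun _ => h, fun _ => hi⟩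
        have hxt1 : l (k+1) - g/8 ≤ x (t+1) i := hdown (t+1) ht1 i hi1
        obtain ⟨w, hwdef⟩ : ∃ w : ℝ, w = ∑ j ∈ (B t k hkm)ᶜ, A t i j := ⟨_, rfl⟩
        have hw0 : 0 ≤ w := hwdef ▸ Finset.sum_nonneg fun j _ => hnonneg t i j
        have hsplit : (∑ j ∈ B t k hkm, A t i j) + w = 1 := by
          rw [hwdef, Finset.sum_add_sum_compl]; exact hrow t i
        have hb1 : ∑ j ∈ B t k hkm, A t i j * x t j
            ≤ (∑ j ∈ B t k hkm, A t i j) * (l k + g/8) := by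
          rw [Finset.sum_mul]
          exact Finset.sum_le_sum fun j hj =>
            mul_le_mul_of_nonneg_left (hup t ht j hj) (hnonneg t i j)
        have hb2 : ∑ j ∈ (B t k hkm)ᶜ, A t i j * x t j ≤ w * C := by
          rw [hwdef, Finset.sum_mul]
          exact Finset.sum_le_sum fun j _ =>
            mul_le_mul_of_nonneg_left ((le_abs_self _).trans (hbd t j)) (hnonneg t i j)
        have hxbound : x (t+1) i ≤ (∑ j ∈ B t k hkm, A t i j) * (l k + g/8) + w * C := by
          rw [hmv, ← Finset.sum_add_sum_compl (B t k hkm) (fun j => A t i j * x t j)]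
          linarith
        have hwc0 : c0 ≤ w := by
          have hs0 : (∑ j ∈ B t k hkm, A t i j) = 1 - w := by linarith
          rw [hs0] at hxbound
          have hl : l (k+1) = l k + g := by rw [hgdef]; ring
          have hub2 : C - l k - g/8 ≤ 2*C + 1 := by
            have := abs_le.1 hlkC
            linarith
          have hkey : 3*g/4 ≤ w * (2*C+1) := by
            nlinarith [hxbound, hxt1, hl, mul_le_mul_of_nonneg_left hub2 hw0]
          rw [hc0def, div_le_iff₀ (by linarith)]
          linarith
        calc c1 = (g/2)^2 * c0 := hc1def
          _ ≤ (g/2)^2 * w := mul_le_mul_of_nonneg_left hwc0 (by positivity)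
          _ = ∑ j ∈ (B t k hkm)ᶜ, A t i j * (g/2)^2 := by
              rw [hwdef, Finset.mul_sum]
              exact Finset.sum_congr rfl fun j _ => by ring
          _ ≤ ∑ j ∈ (B t k hkm)ᶜ, A t i j * (x t i - x t j)^2 := by
              refine Finset.sum_le_sum fun j hj => ?_
              have hjB : j ∉ B t k hkm := by simpa using hj
              have hs := hsep t ht i hi j hjB
              have : (g/2)^2 ≤ (x t i - x t j)^2 := by nlinarith
              exact mul_le_mul_of_nonneg_left this (hnonneg t i j)
          _ ≤ ∑ j, A t i j * (x t i - x t j)^2 :=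
              Finset.sum_le_sum_of_subset_of_nonneg (Finset.subset_univ _)
                (fun j _ _ => mul_nonneg (hnonneg t i j) (sq_nonneg _))
      · -- downward switch
        have hi1 : i ∈ B (t+1) k hkm := by
          by_contra hq
          exact hch ⟨fun hp => absurd hp hi, fun hq' => absurd hq' hq⟩
        have hxt1 : x (t+1) i ≤ l k + g/8 := hup (t+1) ht1 i hi1
        obtain ⟨w, hwdef⟩ : ∃ w : ℝ, w = ∑ j ∈ B t k hkm, A t i j := ⟨_, rfl⟩
        have hw0 : 0 ≤ w := hwdef ▸ Finset.sum_nonneg fun j _ => hnonneg t i j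
        have hsplit : w + (∑ j ∈ (B t k hkm)ᶜ, A t i j) = 1 := by
          rw [hwdef, Finset.sum_add_sum_compl]; exact hrow t i
        have hb1 : w * (-C) ≤ ∑ j ∈ B t k hkm, A t i j * x t j := by
          rw [hwdef, Finset.sum_mul]
          exact Finset.sum_le_sum fun j _ =>
            mul_le_mul_of_nonneg_left (neg_le_of_abs_le (hbd t j)) (hnonneg t i j)
        have hb2 : (∑ j ∈ (B t k hkm)ᶜ, A t i j) * (l (k+1) - g/8)
            ≤ ∑ j ∈ (B t k hkm)ᶜ, A t i j * x t j := by
          rw [Finset.sum_mul]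
          refine Finset.sum_le_sum fun j hj => ?_
          have hjB : j ∉ B t k hkm := by simpa using hj
          exact mul_le_mul_of_nonneg_left (hdown t ht j hjB) (hnonneg t i j)
        have hxbound : w * (-C) + (∑ j ∈ (B t k hkm)ᶜ, A t i j) * (l (k+1) - g/8)
            ≤ x (t+1) i := by
          rw [hmv, ← Finset.sum_add_sum_compl (B t k hkm) (fun j => A t i j * x t j)]
          linarith
        have hwc0 : c0 ≤ w := by
          have hs0 : (∑ j ∈ (B t k hkm)ᶜ, A t i j) = 1 - w := by linarith
          rw [hs0] at hxbound
          have hl : l (k+1) = l k + g := by rw [hgdef]; ring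
          have hub2 : l (k+1) - g/8 + C ≤ 2*C + 1 := by
            have := abs_le.1 hlk1C
            linarith
          have hkey : 3*g/4 ≤ w * (2*C+1) := by
            nlinarith [hxbound, hxt1, hl, mul_le_mul_of_nonneg_left hub2 hw0]
          rw [hc0def, div_le_iff₀ (by linarith)]
          linarith
        calc c1 = (g/2)^2 * c0 := hc1def
          _ ≤ (g/2)^2 * w := mul_le_mul_of_nonneg_left hwc0 (by positivity)
          _ = ∑ j ∈ B t k hkm, A t i j * (g/2)^2 := by
              rw [hwdef, Finset.mul_sum]
              exact Finset.sum_congr rfl fun j _ => by ring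
          _ ≤ ∑ j ∈ B t k hkm, A t i j * (x t i - x t j)^2 := by
              refine Finset.sum_le_sum fun j hj => ?_
              have hs := hsep t ht j hj i hi
              have : (g/2)^2 ≤ (x t i - x t j)^2 := by nlinarith
              exact mul_le_mul_of_nonneg_left this (hnonneg t i j)
          _ ≤ ∑ j, A t i j * (x t i - x t j)^2 :=
              Finset.sum_le_sum_of_subset_of_nonneg (Finset.subset_univ _)
                (fun j _ _ => mul_nonneg (hnonneg t i j) (sq_nonneg _))
    -- only finitely many membership changes for each agent
    have hchfin : ∀ i : Fin m,
        {t : ℕ | T1 ≤ t ∧ ¬ (i ∈ B t k hkm ↔ i ∈ B (t+1) k hkm)}.Finite := by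
      intro i
      by_contra hinf
      obtain ⟨F, hFsub, hFcard⟩ := Set.Infinite.exists_subset_card_eq hinf
        (Nat.ceil ((V 0 / δ) / c1) + 1)
      have hbig : (F.card : ℝ) * c1 ≤ ∑ t ∈ F, Q t := by
        calc (F.card : ℝ) * c1 = ∑ _t ∈ F, c1 := by rw [Finset.sum_const, nsmul_eq_mul]
          _ ≤ ∑ t ∈ F, Q t := by
              refine Finset.sum_le_sum fun t htF => ?_
              have hmem := hFsub htF
              exact (hquantum i t hmem.1 hmem.2).trans (hQ_ge_row t i)
      have h1 := hQpart F
      rw [hFcard] at hbig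
      have h2 : (V 0 / δ) / c1 < ((Nat.ceil ((V 0 / δ) / c1) + 1 : ℕ) : ℝ) := by
        push_cast
        have := Nat.le_ceil ((V 0 / δ) / c1)
        linarith
      rw [div_lt_iff₀ hc1] at h2
      linarith
    have hUfin : (⋃ i : Fin m,
        {t : ℕ | T1 ≤ t ∧ ¬ (i ∈ B t k hkm ↔ i ∈ B (t+1) k hkm)}).Finite :=
      Set.finite_iUnion hchfin
    obtain ⟨T2', hT2'⟩ := hUfin.bddAbove
    obtain ⟨T2, hT2def⟩ : ∃ T : ℕ, T = max T1 (T2' + 1) := ⟨_, rfl⟩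
    have hT12 : T1 ≤ T2 := by rw [hT2def]; exact le_max_left _ _
    have hstable : ∀ t, T2 ≤ t → ∀ i : Fin m, (i ∈ B t k hkm ↔ i ∈ B T2 k hkm) := by
      intro t ht
      induction t, ht using Nat.le_induction with
      | base => intro i; exact Iff.rfl
      | succ n hn ih =>
        intro i
        have hnoch : (i ∈ B n k hkm ↔ i ∈ B (n+1) k hkm) := by
          by_contra hch
          have hmem : n ∈ ⋃ i : Fin m,
              {t : ℕ | T1 ≤ t ∧ ¬ (i ∈ B t k hkm ↔ i ∈ B (t+1) k hkm)} :=
            Set.mem_iUnion.2 ⟨i, ⟨hT12.trans hn, hch⟩⟩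
          have hle := hT2' hmem
          have : T2' + 1 ≤ T2 := by rw [hT2def]; exact le_max_right _ _
          omega
        exact hnoch.symm.trans (ih i)
    refine ⟨B T2 k hkm, ?_, ?_⟩
    · rw [eventually_atTop]
      refine ⟨T2, fun t ht h => ?_⟩
      ext i
      exact hstable t ht i
    · intro a b ha hb
      have hmema : ∀ t, T2 ≤ t → a ∈ B t k hkm := fun t ht => (hstable t ht a).2 ha
      have hmemb : ∀ t, T2 ≤ t → b ∉ B t k hkm := fun t ht hbt =>
        hb ((hstable t ht b).1 hbt)
      have hsepab : ∀ t, T2 ≤ t → g/2 ≤ |x t a - x t b| := by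
        intro t ht
        have h1 := hsep t (hT12.trans ht) a (hmema t ht) b (hmemb t ht)
        rw [abs_sub_comm]
        exact h1.trans (le_abs_self _)
      have hcrossbound : ∀ (c d : Fin m), (∀ t, T2 ≤ t → g/2 ≤ |x t c - x t d|) →
          (∑' t, ENNReal.ofReal (A t c d)) ≠ ⊤ := by
        intro c d hcd
        refine tsum_ofReal_ne_top_of_partial (fun t => hnonneg t c d)
          (c := (T2 : ℝ) + (4/g^2) * (V 0 / δ)) (fun F => ?_)
        rw [← Finset.sum_filter_add_sum_filter_not F (· < T2) (fun t => A t c d)]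
        have h1 : ∑ t ∈ F.filter (· < T2), A t c d ≤ (T2:ℝ) := by
          calc ∑ t ∈ F.filter (· < T2), A t c d
              ≤ ∑ t ∈ Finset.range T2, A t c d :=
                Finset.sum_le_sum_of_subset_of_nonneg
                  (fun t ht => Finset.mem_range.2 (Finset.mem_filter.1 ht).2)
                  (fun t _ _ => hnonneg t c d)
            _ ≤ ∑ _t ∈ Finset.range T2, (1:ℝ) := Finset.sum_le_sum fun t _ => hAle1 t c d
            _ = T2 := by simp
        have h2 : ∑ t ∈ F.filter (fun t => ¬ t < T2), A t c d ≤ (4/g^2) * (V 0 / δ) := by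
          have h4g : (4/g^2) * (g/2)^2 = 1 := by field_simp; ring
          have hterm : ∀ t ∈ F.filter (fun t => ¬ t < T2),
              A t c d ≤ (4/g^2) * (A t c d * (x t c - x t d)^2) := by
            intro t ht
            have ht2 : T2 ≤ t := by
              have := (Finset.mem_filter.1 ht).2; omega
            have habs := hcd t ht2
            have hsq : (g/2)^2 ≤ (x t c - x t d)^2 := by
              have h5 : (g/2)^2 ≤ |x t c - x t d|^2 := by nlinarith [abs_nonneg (x t c - x t d)]
              rwa [sq_abs] at h5
            have hpos : (0:ℝ) ≤ 4/g^2 := by positivity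
            have hA1 : A t c d * ((4/g^2) * (g/2)^2) = A t c d := by rw [h4g, mul_one]
            have hint := mul_le_mul_of_nonneg_left hsq (mul_nonneg hpos (hnonneg t c d))
            linarith [hA1, hint]
          calc ∑ t ∈ F.filter (fun t => ¬ t < T2), A t c d
              ≤ ∑ t ∈ F.filter (fun t => ¬ t < T2),
                  (4/g^2) * (A t c d * (x t c - x t d)^2) :=
                Finset.sum_le_sum hterm
            _ = (4/g^2) * ∑ t ∈ F.filter (fun t => ¬ t < T2),
                  A t c d * (x t c - x t d)^2 := by rw [Finset.mul_sum]
            _ ≤ (4/g^2) * (V 0 / δ) := by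
                refine mul_le_mul_of_nonneg_left ?_ (by positivity)
                calc ∑ t ∈ F.filter (fun t => ¬ t < T2), A t c d * (x t c - x t d)^2
                    ≤ ∑ t ∈ F.filter (fun t => ¬ t < T2), Q t :=
                      Finset.sum_le_sum fun t _ => hQ_ge_pair t c d
                  _ ≤ V 0 / δ := hQpart _
        linarith
      exact ⟨hcrossbound a b hsepab,
        hcrossbound b a (fun t ht => by rw [abs_sub_comm]; exact hsepab t ht)⟩
  -- core pairwise statement
  have core : ∀ i j : Fin m, (∑' t : ℕ, ENNReal.ofReal (A t i j)) = ⊤ →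
      Tendsto (fun t => x t i - x t j) atTop (𝓝 0) := by
    intro i j hij
    choose S' hS'ev hS'cross using hgapmain
    have hagree : ∀ k (hk : k ∈ K), (i ∈ S' k hk ↔ j ∈ S' k hk) := by
      intro k hk
      constructor
      · intro hi
        by_contra hj
        exact (hS'cross k hk i j hi hj).1 hij
      · intro hj
        by_contra hi
        exact (hS'cross k hk j i hj hi).2 hij
    rw [NormedAddCommGroup.tendsto_nhds_zero]
    intro ε hε
    -- choose the accuracy η
    obtain ⟨F, hFdef⟩ : ∃ F : Finset ℝ,
        F = insert (ε/4) (K.image fun k => (l (k+1) - l k)/8) := ⟨_, rfl⟩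
    have hFne : F.Nonempty := ⟨ε/4, by rw [hFdef]; exact Finset.mem_insert_self _ _⟩
    obtain ⟨η, hηdef⟩ : ∃ η : ℝ, η = F.min' hFne := ⟨_, rfl⟩
    have hηε : η ≤ ε/4 := by
      rw [hηdef]
      exact Finset.min'_le F _ (by rw [hFdef]; exact Finset.mem_insert_self _ _)
    have hηK : ∀ k ∈ K, η ≤ (l (k+1) - l k)/8 := by
      intro k hk
      rw [hηdef]
      exact Finset.min'_le F _
        (by rw [hFdef]; exact Finset.mem_insert_of_mem (Finset.mem_image_of_mem _ hk))
    have hη0 : 0 < η := by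
      have hmem : η ∈ F := hηdef ▸ F.min'_mem hFne
      rw [hFdef] at hmem
      rcases Finset.mem_insert.1 hmem with h | h
      · rw [h]; linarith
      · obtain ⟨k, hk, hkeq⟩ := Finset.mem_image.1 h
        rw [hKdef, Finset.mem_filter] at hk
        rw [← hkeq]
        linarith [hk.2]
    -- eventual statements
    have E1 : ∀ᶠ t in atTop, ∀ k ∈ K, ∀ hk : k ∈ K, ∀ h : k ≤ m,
        B t k h = S' k hk := by
      rw [eventually_all_finset]
      intro k hk
      exact (hS'ev k hk).mono fun t ht hk' h => ht h
    have E2 : ∀ᶠ t in atTop, ∀ k ∈ Finset.range (m+1), L k - η ≤ s k t := by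
      rw [eventually_all_finset]
      intro k hk
      have hkm : k ≤ m := by have := Finset.mem_range.1 hk; omega
      exact ((hsL k hkm).eventually
        (eventually_gt_nhds (by linarith : L k - η < L k))).mono fun t ht => ht.le
    filter_upwards [E1, E2] with t hE1 hE2
    -- each agent sits η-close to one of the limit levels
    have hrank : ∀ a : Fin m, ∃ ka, 1 ≤ ka ∧ ka ≤ m ∧ |x t a - l ka| ≤ η := by
      intro a
      obtain ⟨M, hMdef⟩ : ∃ M : Finset ℕ,
          M = (Finset.Icc 0 m).filter (fun k => ∃ h : k ≤ m, a ∈ B t k h) := ⟨_, rfl⟩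
      have hMne : M.Nonempty := by
        refine ⟨m, ?_⟩
        rw [hMdef, Finset.mem_filter, Finset.mem_Icc]
        refine ⟨⟨Nat.zero_le _, le_refl _⟩, le_refl m, ?_⟩
        have huniv : B t m (le_refl m) = Finset.univ :=
          Finset.eq_univ_of_card _ (by rw [hBcard]; simp)
        rw [huniv]; exact Finset.mem_univ a
      obtain ⟨ka, hkadef⟩ : ∃ ka : ℕ, ka = M.min' hMne := ⟨_, rfl⟩
      have hkaM : ka ∈ M := hkadef ▸ M.min'_mem hMne
      rw [hMdef, Finset.mem_filter, Finset.mem_Icc] at hkaM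
      obtain ⟨⟨_, hkam⟩, hkm', hmem⟩ := hkaM
      have hka1 : 1 ≤ ka := by
        have hpos := Finset.card_pos.2 ⟨a, hmem⟩
        rw [hBcard] at hpos
        omega
      have hka1m : ka - 1 ≤ m := by omega
      have hnotmem : a ∉ B t (ka-1) hka1m := by
        intro hmem'
        have hin : (ka - 1) ∈ M := by
          rw [hMdef, Finset.mem_filter, Finset.mem_Icc]
          exact ⟨⟨Nat.zero_le _, by omega⟩, hka1m, hmem'⟩
        have := M.min'_le _ hin
        omega
      have hub : x t a ≤ l ka + η := by
        have h1 : x t a ≤ s ka t - s (ka-1) t :=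
          sset_mem_le (x t) (hBcard t ka hkm') (hBsum t ka hkm') hmem
        have h2 : s ka t ≤ L ka := hsle ka hkam t
        have h3 : L (ka-1) - η ≤ s (ka-1) t :=
          hE2 (ka-1) (Finset.mem_range.2 (by omega))
        have h4 : l ka = L ka - L (ka-1) := by simp only [hldef]
        linarith
      have hlb : l ka - η ≤ x t a := by
        have h1 : s (ka-1+1) t - s (ka-1) t ≤ x t a :=
          sset_notmem_ge (x t) (hBcard t (ka-1) hka1m) (hBsum t (ka-1) hka1m) hnotmem
        have hkk : ka - 1 + 1 = ka := by omega
        rw [hkk] at h1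
        have h2 : L ka - η ≤ s ka t := hE2 ka (Finset.mem_range.2 (by omega))
        have h3 : s (ka-1) t ≤ L (ka-1) := hsle (ka-1) hka1m t
        have h4 : l ka = L ka - L (ka-1) := by simp only [hldef]
        linarith
      exact ⟨ka, hka1, hkam, abs_le.2 ⟨by linarith, by linarith⟩⟩
    obtain ⟨ki, hki1, hkim, hki⟩ := hrank i
    obtain ⟨kj, hkj1, hkjm, hkj⟩ := hrank j
    -- two agents agreeing on all gaps sit at the same level
    have sub : ∀ (a b : Fin m) (ka kb : ℕ), 1 ≤ ka → ka ≤ m → 1 ≤ kb → kb ≤ m →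
        |x t a - l ka| ≤ η → |x t b - l kb| ≤ η →
        (∀ k (hk : k ∈ K), (a ∈ S' k hk ↔ b ∈ S' k hk)) →
        l ka < l kb → False := by
      intro a b ka kb hka1 hkam hkb1 hkbm hxa hxb hab hlt
      have hkakb : ka ≤ kb := by
        by_contra h
        push_neg at h
        have := hlmono kb ka hkb1 (by omega) hkam
        linarith
      obtain ⟨M2, hM2def⟩ : ∃ M2 : Finset ℕ,
          M2 = (Finset.Icc ka kb).filter (fun r => l r = l ka) := ⟨_, rfl⟩
      have hM2ne : M2.Nonempty :=
        ⟨ka, by rw [hM2def, Finset.mem_filter, Finset.mem_Icc]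
                exact ⟨⟨le_refl _, hkakb⟩, rfl⟩⟩
      obtain ⟨k, hkdef2⟩ : ∃ k : ℕ, k = M2.max' hM2ne := ⟨_, rfl⟩
      have hkM2 : k ∈ M2 := hkdef2 ▸ M2.max'_mem hM2ne
      rw [hM2def, Finset.mem_filter, Finset.mem_Icc] at hkM2
      obtain ⟨⟨hkak, hkkb⟩, hlk⟩ := hkM2
      have hkltkb : k < kb := by
        rcases lt_or_eq_of_le hkkb with h | h
        · exact h
        · rw [h] at hlk; linarith
      have hlk1 : l k < l (k+1) := by
        have hmono1 : l ka ≤ l (k+1) := hlmono ka (k+1) hka1 (by omega) (by omega)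
        rcases lt_or_eq_of_le hmono1 with h | h
        · rw [hlk]; exact h
        · exfalso
          have hin : (k+1) ∈ M2 := by
            rw [hM2def, Finset.mem_filter, Finset.mem_Icc]
            exact ⟨⟨by omega, by omega⟩, h.symm⟩
          have := M2.le_max' _ hin
          omega
      have hkK : k ∈ K := by
        rw [hKdef, Finset.mem_filter, Finset.mem_Icc]
        exact ⟨⟨by omega, by omega⟩, hlk1⟩
      have hkm : k ≤ m := by omega
      have hηk := hηK k hkK
      have hlkval2 : l k = L k - L (k-1) := by simp only [hldef]
      have hlk1val2 : l (k+1) = L (k+1) - L k := by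
        simp only [hldef, Nat.add_sub_cancel]
      have haB : a ∈ B t k hkm := by
        by_contra ha
        have h1 : s (k+1) t - s k t ≤ x t a :=
          sset_notmem_ge (x t) (hBcard t k hkm) (hBsum t k hkm) ha
        have h2 : L (k+1) - η ≤ s (k+1) t := hE2 (k+1) (Finset.mem_range.2 (by omega))
        have h3 : s k t ≤ L k := hsle k hkm t
        have h5 := abs_le.1 hxa
        have h6 : x t a ≤ l k + η := by rw [hlk]; linarith
        linarith
      have hbB : b ∉ B t k hkm := by
        intro hb
        have h1 : x t b ≤ s k t - s (k-1) t :=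
          sset_mem_le (x t) (hBcard t k hkm) (hBsum t k hkm) hb
        have h2 : L (k-1) - η ≤ s (k-1) t := hE2 (k-1) (Finset.mem_range.2 (by omega))
        have h3 : s k t ≤ L k := hsle k hkm t
        have h4 : l (k+1) ≤ l kb := hlmono (k+1) kb (by omega) (by omega) hkbm
        have h5 := abs_le.1 hxb
        linarith
      rw [hE1 k hkK hkK hkm] at haB hbB
      exact hbB ((hab k hkK).1 haB)
    have hl_eq : l ki = l kj := by
      rcases lt_trichotomy (l ki) (l kj) with h | h | h
      · exact absurd h fun h => sub i j ki kj hki1 hkim hkj1 hkjm hki hkj hagree h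
      · exact h
      · exact absurd h fun h =>
          sub j i kj ki hkj1 hkjm hki1 hkim hkj hki (fun k hk => (hagree k hk).symm) h
    have habs : |x t i - x t j| ≤ 2 * η := by
      have h1 := abs_le.1 hki
      have h2 := abs_le.1 hkj
      rw [hl_eq] at h1
      rw [abs_le]
      constructor <;> linarith [h1.1, h1.2, h2.1, h2.2]
    calc ‖x t i - x t j‖ = |x t i - x t j| := Real.norm_eq_abs _
      _ ≤ 2 * η := habs
      _ < ε := by linarith
  -- conclude along walks
  have edge : ∀ a b : Fin m,
      (SimpleGraph.fromRel (fun i₁ i₂ => (∑' t : ℕ, ENNReal.ofReal (A t i₁ i₂)) = ⊤)).Adj a b →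
      Tendsto (fun t => x t a - x t b) atTop (𝓝 0) := by
    intro a b hab
    rw [SimpleGraph.fromRel_adj] at hab
    rcases hab with ⟨hne, h | h⟩
    · exact core a b h
    · have := (core b a h).neg
      simp only [neg_sub, neg_zero] at this
      exact this
  intro i₁ i₂ hreach
  obtain ⟨p⟩ := hreach
  induction p with
  | nil => simpa using (tendsto_const_nhds : Tendsto (fun _ : ℕ => (0:ℝ)) atTop (𝓝 0))
  | @cons u v w h q ih =>
    have h1 := edge u v h
    have h2 := ih
    have := h1.add h2
    simp only [add_zero] at this
    convert this using 2 with t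
    ring
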